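/- If ∏_{k≥0} α_k > 0, then the final range M of the Firework process has finite expectation. -/

import Mathlib

open MeasureTheory ProbabilityTheory Filter Finset
open scoped ENNReal

/-- The final number of spreaders of the Firework process:
`M = min{ i ≥ 0 : R_j ≤ i - j for all j = 0,...,i }`, with value `⊤` if no such `i` exists. -/
noncomputable def fireworkM {Ω : Type*} (R : ℕ → Ω → ℕ) (ω : Ω) : ℕ∞ :=
  sInf {N : ℕ∞ | ∃ i : ℕ, N = (i : ℕ∞) ∧ ∀ j ≤ i, R j ω ≤ i - j}

private lemma enat_cast_eq_tsum (a : ℕ∞) :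
    (a : ℝ≥0∞) = ∑' n : ℕ, if (n : ℕ∞) < a then (1:ℝ≥0∞) else 0 := by
  induction a using ENat.recTopCoe with
  | top =>
    have : ∀ n : ℕ, (if (n : ℕ∞) < ⊤ then (1:ℝ≥0∞) else 0) = 1 := by
      intro n; simp [lt_top_iff_ne_top]
    rw [tsum_congr this, ENat.toENNReal_top]
    exact (ENNReal.tsum_const_eq_top_of_ne_zero one_ne_zero).symm
  | coe m =>
    have hz : ∀ n : ℕ, n ∉ Finset.range m → (if (n : ℕ∞) < (m:ℕ∞) then (1:ℝ≥0∞) else 0) = 0 := by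
      intro n hn
      simp only [Finset.mem_range, not_lt] at hn
      rw [if_neg (not_lt.mpr (by exact_mod_cast hn))]
    rw [ENat.toENNReal_coe, tsum_eq_sum hz,
      Finset.sum_congr rfl (fun n hn => if_pos (by exact_mod_cast Finset.mem_range.mp hn))]
    simp

private lemma renewal_sum_bound (b q : ℕ → ℝ≥0∞) (p : ℝ≥0∞) (hp : p < 1)
    (hb0 : b 0 ≤ 1)
    (hrec : ∀ n, b (n+1) ≤ ∑ j ∈ Finset.range (n+1), q (n+1-j) * b j)
    (hq : ∀ N, ∑ i ∈ Finset.range N, q (i+1) ≤ p) :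
    ∀ N, ∑ n ∈ Finset.range N, b n ≤ (1-p)⁻¹ := by
  have h2 : (1:ℝ≥0∞) - p ≠ 0 := (tsub_pos_iff_lt.mpr hp).ne'
  have h3 : (1:ℝ≥0∞) - p ≠ ⊤ := (lt_of_le_of_lt tsub_le_self ENNReal.one_lt_top).ne
  have hkey : (1:ℝ≥0∞) + p * (1-p)⁻¹ = (1-p)⁻¹ := by
    have h1 : ((1:ℝ≥0∞) - p) + p = 1 := tsub_add_cancel_of_le hp.le
    calc (1:ℝ≥0∞) + p * (1-p)⁻¹ = (1-p) * (1-p)⁻¹ + p * (1-p)⁻¹ := by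
          rw [ENNReal.mul_inv_cancel h2 h3]
      _ = ((1-p) + p) * (1-p)⁻¹ := by rw [add_mul]
      _ = (1-p)⁻¹ := by rw [h1, one_mul]
  intro N
  induction N with
  | zero => simp
  | succ N ih =>
    have hinner : ∀ j, ∑ i ∈ Finset.Ico j N, q (i+1-j) ≤ p := by
      intro j
      rw [Finset.sum_Ico_eq_sum_range]
      refine le_trans (le_of_eq (Finset.sum_congr rfl fun k _ => ?_)) (hq (N - j))
      congr 1; omega
    have hswap : ∑ i ∈ Finset.range N, ∑ j ∈ Finset.range (i+1), q (i+1-j) * b j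
        ≤ p * ∑ j ∈ Finset.range N, b j := by
      rw [Finset.sum_comm' (s := Finset.range N) (t := fun i => Finset.range (i+1))
        (t' := Finset.range N) (s' := fun j => Finset.Ico j N)
        (h := by intro i j; simp only [Finset.mem_range, Finset.mem_Ico]; omega)]
      rw [Finset.mul_sum]
      refine Finset.sum_le_sum fun j hj => ?_
      rw [← Finset.sum_mul]
      exact mul_le_mul' (hinner j) le_rfl
    rw [Finset.sum_range_succ']
    calc (∑ i ∈ Finset.range N, b (i+1)) + b 0
        ≤ (∑ i ∈ Finset.range N, ∑ j ∈ Finset.range (i+1), q (i+1-j) * b j) + 1 :=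
          add_le_add (Finset.sum_le_sum fun i _ => hrec i) hb0
      _ ≤ p * (∑ j ∈ Finset.range N, b j) + 1 := add_le_add_left hswap 1
      _ ≤ p * (1-p)⁻¹ + 1 := add_le_add_left (mul_le_mul' le_rfl ih) 1
      _ = (1-p)⁻¹ := by rw [add_comm, hkey]

/-- if `∏_{k≥0} α_k > 0` then the final range `M` of the Firework process
has finite expectation. -/
theorem rumor_stmt_9 {Ω : Type*} [MeasurableSpace Ω] (P : Measure Ω) [IsProbabilityMeasure P]
    (R : ℕ → Ω → ℕ) (hmeas : ∀ i, Measurable (R i))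
    (hindep : iIndepFun R P)
    (hident : ∀ i, Measure.map (R i) P = Measure.map (R 0) P)
    (α : ℕ → ℝ≥0∞) (hα : ∀ k, P {ω | R 0 ω ≤ k} = α k)
    (hle1 : ∀ k, α k ≤ 1) (hα0 : 0 < α 0 ∧ α 0 < 1)
    (L : ℝ≥0∞) (hLpos : 0 < L)
    (hprod : Tendsto (fun n => ∏ i ∈ Finset.range n, α i) atTop (nhds L)) :
    (∫⁻ ω, (fireworkM R ω : ℝ≥0∞) ∂P) < ⊤ := by
  classical
  set Bn : ℕ → Set Ω := fun n => {ω | ∀ i < n, ∃ l ≤ i, ¬ R l ω ≤ i - l} with hBn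
  have MB : ∀ n, MeasurableSet (Bn n) := by
    intro n
    have he : Bn n = ⋂ i ∈ Finset.range n, ⋃ l ∈ Finset.range (i+1), (R l ⁻¹' Set.Iic (i - l))ᶜ := by
      ext ω
      simp only [hBn, Set.mem_setOf_eq, Set.mem_iInter, Set.mem_iUnion, Set.mem_compl_iff,
        Set.mem_preimage, Set.mem_Iic, Finset.mem_range, Nat.lt_succ_iff]
      constructor
      · intro h i hi; obtain ⟨l, hl, hR⟩ := h i hi; exact ⟨l, hl, hR⟩
      · intro h i hi; obtain ⟨l, hl, hR⟩ := h i hi; exact ⟨l, hl, hR⟩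
    rw [he]
    exact MeasurableSet.biInter (Finset.range n).countable_toSet fun i _ =>
      MeasurableSet.biUnion (Finset.range (i+1)).countable_toSet fun l _ =>
        ((hmeas l) measurableSet_Iic).compl
  have hsingle : ∀ (l : ℕ) (k : ℕ), P (R l ⁻¹' Set.Iic k) = α k := by
    intro l k
    rw [← Measure.map_apply (hmeas l) measurableSet_Iic, hident l,
      Measure.map_apply (hmeas 0) measurableSet_Iic, ← hα k]
    rfl
  have hcompl : ∀ (l : ℕ) (k : ℕ), P (R l ⁻¹' (Set.Iic k)ᶜ) = 1 - α k := by
    intro l k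
    rw [Set.preimage_compl, prob_compl_eq_one_sub ((hmeas l) measurableSet_Iic), hsingle]
  set g : ℕ → ℝ≥0∞ := fun N => ∏ i ∈ Finset.range N, α i with hg
  set q : ℕ → ℝ≥0∞ := fun k => (1 - α (k-1)) * g (k-1) with hqdef
  -- the renewal-type recursion
  have hrec : ∀ n, P (Bn (n+1)) ≤ ∑ j ∈ Finset.range (n+1), q (n+1-j) * P (Bn j) := by
    intro n
    set D : ℕ → Set Ω := fun j =>
      (R j ⁻¹' (Set.Iic (n-j))ᶜ) ∩ ⋂ l ∈ Finset.Ioc j n, R l ⁻¹' Set.Iic (n - l) with hD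
    have hsub : Bn (n+1) ⊆ ⋃ j ∈ Finset.range (n+1), (Bn j ∩ D j) := by
      intro ω hω
      have hω' : ∀ i < n+1, ∃ l ≤ i, ¬ R l ω ≤ i - l := hω
      obtain ⟨l0, hl0, hR0⟩ := hω' n (Nat.lt_succ_self n)
      set J := Nat.findGreatest (fun l => ¬ R l ω ≤ n - l) n with hJ
      have hJP : ¬ R J ω ≤ n - J :=
        Nat.findGreatest_spec (P := fun l => ¬ R l ω ≤ n - l) hl0 hR0
      have hJle : J ≤ n := Nat.findGreatest_le n
      refine Set.mem_iUnion₂.mpr ⟨J, Finset.mem_range.mpr (by omega), ?_, ?_⟩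
      · exact fun i hi => hω' i (by omega)
      · refine ⟨hJP, ?_⟩
        simp only [Set.mem_iInter, Finset.mem_Ioc, Set.mem_preimage, Set.mem_Iic]
        intro l hl
        exact not_not.mp (Nat.findGreatest_is_greatest hl.1 hl.2)
    have step : ∀ j ∈ Finset.range (n+1), P (Bn j ∩ D j) = q (n+1-j) * P (Bn j) := by
      intro j hj
      have hjn : j ≤ n := Nat.lt_succ_iff.mp (Finset.mem_range.mp hj)
      have hdisj : Disjoint (Finset.range j) (Finset.Icc j n) := by
        simp only [Finset.disjoint_left, Finset.mem_range, Finset.mem_Icc]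
        omega
      have hIF : IndepFun (fun ω (i : {x // x ∈ Finset.range j}) => R i.1 ω)
          (fun ω (i : {x // x ∈ Finset.Icc j n}) => R i.1 ω) P :=
        hindep.indepFun_finset _ _ hdisj hmeas
      set CC : Set ({x // x ∈ Finset.range j} → ℕ) :=
        {x | ∀ i < j, ∃ l, ∃ h : l < j, l ≤ i ∧ ¬ x ⟨l, Finset.mem_range.mpr h⟩ ≤ i - l} with hCC
      set DD : Set ({x // x ∈ Finset.Icc j n} → ℕ) :=
        {x | (¬ x ⟨j, Finset.mem_Icc.mpr ⟨le_rfl, hjn⟩⟩ ≤ n - j) ∧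
          ∀ l : {x // x ∈ Finset.Icc j n}, j < l.1 → x l ≤ n - l.1} with hDD
      have hCeq : Bn j = (fun ω (i : {x // x ∈ Finset.range j}) => R i.1 ω) ⁻¹' CC := by
        ext ω
        simp only [hBn, Set.mem_setOf_eq, Set.mem_preimage, hCC]
        constructor
        · intro h i hi
          obtain ⟨l, hl, hR⟩ := h i hi
          exact ⟨l, lt_of_le_of_lt hl hi, hl, hR⟩
        · intro h i hi
          obtain ⟨l, _, hl, hR⟩ := h i hi
          exact ⟨l, hl, hR⟩
      have hDeq : D j = (fun ω (i : {x // x ∈ Finset.Icc j n}) => R i.1 ω) ⁻¹' DD := by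
        ext ω
        simp only [hD, Set.mem_inter_iff, Set.mem_preimage, Set.mem_compl_iff, Set.mem_Iic,
          Set.mem_iInter, Finset.mem_Ioc, hDD, Set.mem_setOf_eq]
        constructor
        · rintro ⟨h1, h2⟩
          exact ⟨h1, fun l hl => h2 l ⟨hl, (Finset.mem_Icc.mp l.2).2⟩⟩
        · rintro ⟨h1, h2⟩
          exact ⟨h1, fun l hl => h2 ⟨l, Finset.mem_Icc.mpr ⟨le_of_lt hl.1, hl.2⟩⟩ hl.1⟩
      have hPBD : P (Bn j ∩ D j) = P (Bn j) * P (D j) := by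
        rw [hCeq, hDeq]
        exact hIF.measure_inter_preimage_eq_mul _ _
          (Set.to_countable CC).measurableSet (Set.to_countable DD).measurableSet
      set sets : ℕ → Set ℕ := fun l => if l = j then (Set.Iic (n-j))ᶜ else Set.Iic (n - l)
        with hsets
      have hIccIns : Finset.Icc j n = insert j (Finset.Ioc j n) := by
        ext l; simp only [Finset.mem_Icc, Finset.mem_insert, Finset.mem_Ioc]; omega
      have hDeq2 : D j = ⋂ l ∈ Finset.Icc j n, R l ⁻¹' sets l := by
        rw [hIccIns, Finset.set_biInter_insert]
        simp only [hD]
        have h1 : sets j = (Set.Iic (n-j))ᶜ := by simp only [hsets, if_pos rfl]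
        rw [h1]
        congr 1
        refine (Set.iInter₂_congr fun l hl => ?_)
        simp only [hsets, if_neg (Finset.mem_Ioc.mp hl).1.ne']
      have hreindex : ∏ l ∈ Finset.Ioc j n, α (n - l) = ∏ i ∈ Finset.range (n - j), α i := by
        have h1 : Finset.Ioc j n = Finset.Ico (j+1) (n+1) := by
          ext l; simp only [Finset.mem_Ioc, Finset.mem_Ico]; omega
        rw [h1, Finset.prod_Ico_eq_prod_range]
        have h2 : n + 1 - (j + 1) = n - j := by omega
        rw [h2]
        calc ∏ i ∈ Finset.range (n - j), α (n - (j + 1 + i))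
            = ∏ i ∈ Finset.range (n - j), α (n - j - 1 - i) :=
              Finset.prod_congr rfl fun i _ => by congr 1; omega
          _ = ∏ i ∈ Finset.range (n - j), α i := Finset.prod_range_reflect α (n - j)
      have hPD : P (D j) = (1 - α (n-j)) * ∏ i ∈ Finset.range (n-j), α i := by
        rw [hDeq2, hindep.measure_inter_preimage_eq_mul _ (fun l _ => by
          simp only [hsets]
          split
          · exact measurableSet_Iic.compl
          · exact measurableSet_Iic), hIccIns, Finset.prod_insert (by simp)]
        congr 1
        · simp only [hsets, if_pos rfl]
          exact hcompl j (n-j)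
        · calc ∏ l ∈ Finset.Ioc j n, P (R l ⁻¹' sets l)
              = ∏ l ∈ Finset.Ioc j n, α (n - l) := Finset.prod_congr rfl fun l hl => by
                simp only [hsets, if_neg (Finset.mem_Ioc.mp hl).1.ne']
                exact hsingle l (n - l)
            _ = ∏ i ∈ Finset.range (n - j), α i := hreindex
      have hq1 : q (n+1-j) = (1 - α (n-j)) * ∏ i ∈ Finset.range (n-j), α i := by
        have h1 : n + 1 - j - 1 = n - j := by omega
        simp only [hqdef, hg, h1]
      rw [hPBD, hPD, hq1, mul_comm]
    calc P (Bn (n+1)) ≤ P (⋃ j ∈ Finset.range (n+1), (Bn j ∩ D j)) := measure_mono hsub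
      _ ≤ ∑ j ∈ Finset.range (n+1), P (Bn j ∩ D j) := measure_biUnion_finset_le _ _
      _ = ∑ j ∈ Finset.range (n+1), q (n+1-j) * P (Bn j) := Finset.sum_congr rfl step
  -- the tail sums of q
  have hgle1 : ∀ N, g N ≤ 1 := fun N =>
    Finset.prod_le_one (fun _ _ => zero_le) (fun i _ => hle1 i)
  have hganti : Antitone g := antitone_nat_of_succ_le fun N => by
    simp only [hg, Finset.prod_range_succ]
    calc (∏ i ∈ Finset.range N, α i) * α N ≤ (∏ i ∈ Finset.range N, α i) * 1 :=
          mul_le_mul' le_rfl (hle1 N)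
      _ = ∏ i ∈ Finset.range N, α i := mul_one _
  have hgL : ∀ N, L ≤ g N := fun N =>
    le_of_tendsto hprod (Filter.eventually_atTop.mpr ⟨N, fun m hm => hganti hm⟩)
  have hqtel : ∀ i, q (i+1) = g i - g (i+1) := by
    intro i
    have hmul : α i * g i = g (i+1) := by
      simp only [hg, Finset.prod_range_succ, mul_comm]
    simp only [hqdef, Nat.add_sub_cancel]
    rw [ENNReal.sub_mul (fun _ _ => (lt_of_le_of_lt (hgle1 i) ENNReal.one_lt_top).ne), one_mul,
      hmul]
  have hqsum : ∀ N, ∑ i ∈ Finset.range N, q (i+1) ≤ 1 - L := by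
    intro N
    have htel : ∑ i ∈ Finset.range N, (g i - g (i+1)) = g 0 - g N := by
      induction N with
      | zero => simp
      | succ N ihN =>
        rw [Finset.sum_range_succ, ihN,
          tsub_add_tsub_cancel (hganti (Nat.zero_le N)) (hganti (Nat.le_succ N))]
    rw [Finset.sum_congr rfl fun i _ => hqtel i, htel]
    have hg0 : g 0 = 1 := by simp [hg]
    rw [hg0]
    exact tsub_le_tsub_left (hgL N) 1
  have hp : (1:ℝ≥0∞) - L < 1 := ENNReal.sub_lt_self ENNReal.one_ne_top one_ne_zero hLpos.ne'
  have hmain := renewal_sum_bound (fun n => P (Bn n)) q (1 - L) hp prob_le_one hrec hqsum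
  -- identification of the tail events of fireworkM
  have hiff : ∀ (ω : Ω) (n : ℕ), ((n:ℕ∞) < fireworkM R ω ↔ ω ∈ Bn (n+1)) := by
    intro ω n
    constructor
    · intro hlt i hi
      by_contra hcon
      push_neg at hcon
      have hmem : (i:ℕ∞) ∈ {N : ℕ∞ | ∃ i' : ℕ, N = (i' : ℕ∞) ∧ ∀ j ≤ i', R j ω ≤ i' - j} :=
        ⟨i, rfl, hcon⟩
      have hle : fireworkM R ω ≤ (i:ℕ∞) := sInf_le hmem
      have hile : (i:ℕ∞) ≤ (n:ℕ∞) := by exact_mod_cast Nat.lt_succ_iff.mp hi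
      exact absurd (lt_of_lt_of_le hlt (hle.trans hile)) (lt_irrefl _)
    · intro hB
      have hB' : ∀ i < n+1, ∃ l ≤ i, ¬ R l ω ≤ i - l := hB
      have h1 : (n:ℕ∞) < ((n+1 : ℕ) : ℕ∞) := by exact_mod_cast Nat.lt_succ_self n
      refine lt_of_lt_of_le h1 (le_sInf ?_)
      rintro N ⟨i, rfl, hN⟩
      have hni : ¬ i < n+1 := by
        intro hi
        obtain ⟨l, hl, hR⟩ := hB' i hi
        exact hR (hN l hl)
      exact_mod_cast Nat.not_lt.mp hni
  have hpoint : ∀ ω, ((fireworkM R ω : ℝ≥0∞))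
      = ∑' n : ℕ, (Bn (n+1)).indicator (fun _ => (1:ℝ≥0∞)) ω := by
    intro ω
    rw [enat_cast_eq_tsum]
    refine tsum_congr fun n => ?_
    by_cases h : ω ∈ Bn (n+1)
    · rw [if_pos ((hiff ω n).mpr h), Set.indicator_of_mem h]
    · rw [if_neg (fun hlt => h ((hiff ω n).mp hlt)), Set.indicator_of_notMem h]
  rw [lintegral_congr hpoint,
    lintegral_tsum (fun n => (measurable_const.indicator (MB (n+1))).aemeasurable)]
  have hind : ∀ n : ℕ, ∫⁻ ω, (Bn (n+1)).indicator (fun _ => (1:ℝ≥0∞)) ω ∂P = P (Bn (n+1)) :=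
    fun n => lintegral_indicator_one (MB (n+1))
  rw [tsum_congr hind]
  have hsum : ∑' n : ℕ, P (Bn (n+1)) ≤ (1 - (1-L))⁻¹ := by
    refine ENNReal.tsum_le_of_sum_range_le fun N => ?_
    calc ∑ n ∈ Finset.range N, P (Bn (n+1))
        ≤ ∑ n ∈ Finset.range (N+1), P (Bn n) := by
          rw [Finset.sum_range_succ']
          exact le_add_right le_rfl
      _ ≤ (1 - (1-L))⁻¹ := hmain (N+1)
  refine lt_of_le_of_lt hsum ?_
  rw [ENNReal.inv_lt_top]
  exact tsub_pos_iff_lt.mpr hp
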